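/- For every expression E on n variables that is not fully normalized, there is a unique word w = α_{i_1}α_{i_2}⋯α_{i_s} with non-increasing indices i_1 ≥ i_2 ≥ ⋯ ≥ i_s such that applying α_{i_s}, then α_{i_{s-1}}, …, then α_{i_1} transforms E into the fully normalized expression I_n. -/

import Mathlib

/-- Binary trees: expressions in a category with multiplication. -/
inductive BT : Type
  | leaf : BT
  | node : BT → BT → BT
deriving DecidableEq

namespace BT

/-- number of leaves (variables) of an expression -/
def leaves : BT → ℕ
  | leaf => 1
  | node l r => leaves l + leaves r

/-- `stab i t` is `t` right-stabilized `i` times: `(t ⊗_i I)`. -/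
def stab : ℕ → BT → BT
  | 0, t => t
  | n+1, t => node (stab n t) leaf

/-- semi-normalized: of the form `(F ⊗ I)` -/
def IsSemi (t : BT) : Prop := ∃ f, t = node f leaf

/-- fully normalized: a left comb, i.e. an iterated right stabilization of `I` -/
def IsComb (t : BT) : Prop := ∃ n, t = stab n leaf

/-- The move `α_i`: `α_0` reassociates `(H ⊗ (K ⊗ L))` to `((H ⊗ K) ⊗ L)` at the
root, and `α_{i+1} (N ⊗ I) = (α_i N) ⊗ I`. -/
inductive Alpha : ℕ → BT → BT → Prop
  | base (H K L : BT) : Alpha 0 (node H (node K L)) (node (node H K) L)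
  | step {i N N'} : Alpha i N N' → Alpha (i+1) (node N leaf) (node N' leaf)

end BT

/-- `Path [i₁, …, iₛ] E F` : the word `α_{i₁} α_{i₂} ⋯ α_{iₛ}` defines a path
from `E` to `F`, the moves being applied right to left (`α_{iₛ}` first). -/
inductive BT.Path : List ℕ → BT → BT → Prop
  | nil (E : BT) : BT.Path [] E E
  | cons {i : ℕ} {l : List ℕ} {E M F : BT} :
      BT.Path l E M → BT.Alpha i M F → BT.Path (i :: l) E F

namespace BT

/-- the unique α-move applicable to a tree, if any -/
def step? : BT → Option (ℕ × BT)
  | leaf => none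
  | node H leaf => (step? H).map (fun p => (p.1 + 1, node p.2 leaf))
  | node H (node K L) => some (0, node (node H K) L)

def mu : BT → ℕ
  | leaf => 1
  | node l r => mu l + 2 * mu r

def spn : BT → ℕ
  | leaf => 0
  | node a leaf => spn a + 1
  | node _ (node _ _) => 0

lemma alpha_step (h : Alpha i E F) : step? E = some (i, F) := by
  induction h with
  | base H K L => rfl
  | step h ih => simp [step?, ih]

lemma step_alpha : ∀ {E : BT} {i F}, step? E = some (i, F) → Alpha i E F := by
  intro E
  induction E with
  | leaf => intro i F h; simp [step?] at h
  | node H r ihH ihr =>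
    cases r with
    | leaf =>
      intro i F h
      cases hs : step? H with
      | none => rw [step?, hs] at h; simp at h
      | some p =>
        rw [step?, hs] at h
        simp only [Option.map_some] at h
        obtain ⟨rfl, rfl⟩ := Prod.mk.injEq .. ▸ (Option.some.injEq .. ▸ h)
        exact Alpha.step (ihH hs)
    | node K L =>
      intro i F h
      simp only [step?, Option.some.injEq, Prod.mk.injEq] at h
      obtain ⟨rfl, rfl⟩ := h
      exact Alpha.base H K L

lemma step_none_iff_comb : ∀ {E : BT}, step? E = none ↔ IsComb E := by
  intro E
  induction E with
  | leaf => simp [step?]; exact ⟨0, rfl⟩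
  | node H r ihH ihr =>
    cases r with
    | leaf =>
      simp only [step?, Option.map_eq_none_iff]
      rw [ihH]
      constructor
      · rintro ⟨n, rfl⟩; exact ⟨n+1, rfl⟩
      · rintro ⟨n, hn⟩
        cases n with
        | zero => simp [stab] at hn
        | succ m =>
          simp only [stab, node.injEq] at hn
          exact ⟨m, hn.1⟩
    | node K L =>
      simp only [step?]
      constructor
      · intro h; simp at h
      · rintro ⟨n, hn⟩
        cases n with
        | zero => simp [stab] at hn
        | succ m => simp [stab] at hn

lemma mu_pos : ∀ t : BT, 1 ≤ mu t := by
  intro t; induction t with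
  | leaf => simp [mu]
  | node l r ihl ihr => simp [mu]; omega

lemma alpha_mu_lt (h : Alpha i E F) : mu F < mu E := by
  induction h with
  | base H K L => have := mu_pos L; simp [mu]; omega
  | step h ih => simp [mu]; omega

lemma alpha_leaves (h : Alpha i E F) : leaves F = leaves E := by
  induction h with
  | base H K L => simp [leaves]; omega
  | step h ih => simp [leaves]; omega

lemma alpha_spn (h : Alpha i E F) : spn E = i ∧ i ≤ spn F := by
  induction h with
  | base H K L => exact ⟨rfl, Nat.zero_le _⟩
  | step h ih =>
    cases h with
    | base H K L => simpa [spn] using ih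
    | step h' => simpa [spn] using ih

lemma leaves_stab (n : ℕ) : leaves (stab n leaf) = n + 1 := by
  induction n with
  | zero => rfl
  | succ m ih => simp [stab, leaves, ih]

lemma path_snoc (h : Path l M F) (ha : Alpha i E M) : Path (l ++ [i]) E F := by
  induction h with
  | nil E' => exact Path.cons (Path.nil E) ha
  | cons hp hA ih => exact Path.cons (ih ha) hA

/-- Existence, with a bound on all indices used. -/
lemma exists_word : ∀ k (E : BT), mu E ≤ k →
    ∃ l : List ℕ, l.Pairwise (· ≥ ·) ∧ (∀ j ∈ l, spn E ≤ j) ∧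
      Path l E (stab (E.leaves - 1) leaf) := by
  intro k
  induction k with
  | zero => intro E h; have := mu_pos E; omega
  | succ k ih =>
    intro E hk
    cases hs : step? E with
    | none =>
      obtain ⟨n, rfl⟩ := step_none_iff_comb.mp hs
      refine ⟨[], List.Pairwise.nil, by simp, ?_⟩
      rw [leaves_stab]
      simpa using Path.nil _
    | some p =>
      obtain ⟨i, F⟩ := p
      have ha := step_alpha hs
      have hmu := alpha_mu_lt ha
      have hlv := alpha_leaves ha
      obtain ⟨hspE, hspF⟩ := alpha_spn ha
      obtain ⟨l, hsort, hbd, hpath⟩ := ih F (by omega)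
      refine ⟨l ++ [i], ?_, ?_, ?_⟩
      · rw [List.pairwise_append]
        refine ⟨hsort, List.pairwise_singleton _ _, ?_⟩
        intro a ha' b hb
        simp at hb; subst hb
        exact le_trans hspF (hbd a ha')
      · intro j hj
        rw [List.mem_append] at hj
        rcases hj with hj | hj
        · exact le_trans (le_of_eq hspE) (le_trans hspF (hbd j hj))
        · simp at hj; omega
      · rw [hlv] at hpath
        exact path_snoc hpath ha

/-- Reversed-path view: moves applied left to right. -/
inductive Path' : List ℕ → BT → BT → Prop
  | nil (E : BT) : Path' [] E E
  | cons {i l E M F} : Alpha i E M → Path' l M F → Path' (i :: l) E F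

lemma path'_snoc (h : Path' l E M) (ha : Alpha i M F) : Path' (l ++ [i]) E F := by
  induction h with
  | nil E' => exact Path'.cons ha (Path'.nil F)
  | cons hA hp ih => exact Path'.cons hA (ih ha)

lemma path_to_path' (h : Path l E F) : Path' l.reverse E F := by
  induction h with
  | nil E => exact Path'.nil E
  | cons hp hA ih => simpa using path'_snoc ih hA

lemma path'_unique : ∀ {l : List ℕ} {E F : BT}, Path' l E F → IsComb F →
    ∀ {l'}, Path' l' E F → l = l' := by
  intro l E F h
  induction h with
  | nil E =>
    intro hF l' h'
    cases h' with
    | nil => rfl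
    | cons hA hp =>
      have := alpha_step hA
      rw [step_none_iff_comb.mpr hF] at this
      exact absurd this (by simp)
  | cons hA hp ih =>
    intro hF l' h'
    cases h' with
    | nil =>
      have := alpha_step hA
      rw [step_none_iff_comb.mpr hF] at this
      exact absurd this (by simp)
    | cons hA' hp' =>
      have h1 := alpha_step hA
      have h2 := alpha_step hA'
      rw [h1] at h2
      simp only [Option.some.injEq, Prod.mk.injEq] at h2
      obtain ⟨rfl, rfl⟩ := h2
      rw [ih hF hp']

end BT

/-- Every expression `E` on `n` variables that is not fully normalized is
transformed into `Iₙ` by a unique word `α_{i₁} ⋯ α_{iₛ}` with non-increasing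
indices `i₁ ≥ i₂ ≥ ⋯ ≥ iₛ`. -/
theorem unique_normalizing_word (E : BT) (hE : ¬ BT.IsComb E) :
    ∃! l : List ℕ, l.Pairwise (· ≥ ·) ∧
      BT.Path l E (BT.stab (E.leaves - 1) BT.leaf) := by
  obtain ⟨l, hsort, _, hpath⟩ := BT.exists_word (BT.mu E) E le_rfl
  refine ⟨l, ⟨hsort, hpath⟩, ?_⟩
  rintro l' ⟨_, hpath'⟩
  have hcomb : BT.IsComb (BT.stab (E.leaves - 1) BT.leaf) := ⟨_, rfl⟩
  have := BT.path'_unique (BT.path_to_path' hpath') hcomb (BT.path_to_path' hpath)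
  exact List.reverse_injective this
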